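/- Let c : Δ(Θ) → ℝ be strictly convex with c(f) = 0 at the prior density f, and define the posterior-separable cost of a binary test t by C(t) = π̄_t·c(f_{th}) + (1−π̄_t)·c(f_{tl}), where π̄_t = ∫π_t dF, f_{th}(θ) = f(θ)π_t(θ)/π̄_t, f_{tl}(θ) = f(θ)(1−π_t(θ))/(1−π̄_t). For λ ∈ (0,1) and μ = 0, define π_d(θ) = (λπ̄_t + (1−λ)π_t(θ))/(1−λ(1−π̄_t)). Then C(d) < C(t), i.e., mixing a test toward its unconditional signal distribution strictly decreases posterior-separable cost. -/

import Mathlib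

open Set MeasureTheory

/-- Mixing a test toward its unconditional signal distribution strictly decreases
posterior-separable cost: `C(d) < C(t)` where `πd = (λπ̄t + (1−λ)πt)/(1−λ(1−π̄t))`. -/
theorem stmt_19 (lo hi : ℝ) (hlohi : lo < hi) (f πt : ℝ → ℝ)
    (hf : ∀ θ ∈ Icc lo hi, 0 ≤ f θ)
    (hf1 : (∫ θ in Icc lo hi, f θ) = 1)
    (hrt : ∀ θ ∈ Icc lo hi, πt θ ∈ Ioo (0:ℝ) 1)
    (p : ℝ) (hp : p = ∫ θ in Icc lo hi, πt θ * f θ) (hp' : p ∈ Ioo (0:ℝ) 1)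
    (D : Set (ℝ → ℝ)) (c : (ℝ → ℝ) → ℝ) (hconv : StrictConvexOn ℝ D c)
    (fth ftl : ℝ → ℝ)
    (hfth : fth = fun θ => f θ * πt θ / p)
    (hftl : ftl = fun θ => f θ * (1 - πt θ) / (1 - p))
    (hfD : f ∈ D) (hthD : fth ∈ D) (htlD : ftl ∈ D)
    (hc0 : c f = 0) (hne : fth ≠ f)
    (lam : ℝ) (hlam : lam ∈ Ioo (0:ℝ) 1)
    (πd : ℝ → ℝ)
    (hπd : πd = fun θ => (lam * p + (1 - lam) * πt θ) / (1 - lam * (1 - p)))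
    (pd : ℝ) (hpd : pd = p / (1 - lam * (1 - p)))
    (fdh fdl : ℝ → ℝ)
    (hfdh : fdh = fun θ => f θ * πd θ / pd)
    (hfdl : fdl = fun θ => f θ * (1 - πd θ) / (1 - pd)) :
    pd * c fdh + (1 - pd) * c fdl < p * c fth + (1 - p) * c ftl := by
  obtain ⟨hp0, hp1⟩ := hp'
  obtain ⟨hl0, hl1⟩ := hlam
  have hs : (0:ℝ) < 1 - lam * (1 - p) := by nlinarith
  have hsne : (1 - lam * (1 - p)) ≠ 0 := ne_of_gt hs
  have hpne : p ≠ 0 := ne_of_gt hp0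
  have h1p0 : (0:ℝ) < 1 - p := by linarith
  have h1pne : (1 - p) ≠ 0 := ne_of_gt h1p0
  have h1l0 : (0:ℝ) < 1 - lam := by linarith
  have hpd0 : 0 < pd := by rw [hpd]; exact div_pos hp0 hs
  have h1pd : 1 - pd = (1 - lam) * (1 - p) / (1 - lam * (1 - p)) := by
    rw [hpd]; field_simp; ring
  have h1pd0 : 0 < 1 - pd := by
    rw [h1pd]; exact div_pos (mul_pos h1l0 h1p0) hs
  have hpdne : pd ≠ 0 := ne_of_gt hpd0
  -- fdl = ftl
  have hdl : fdl = ftl := by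
    rw [hfdl, hftl]; funext θ
    rw [hπd, h1pd]
    field_simp
    ring
  -- fdh = lam • f + (1-lam) • fth
  have hdh : fdh = lam • f + (1 - lam) • fth := by
    rw [hfdh, hfth]; funext θ
    simp only [Pi.add_apply, Pi.smul_apply, smul_eq_mul]
    rw [hπd, hpd]
    field_simp
  -- f = p • fth + (1-p) • ftl
  have hfcomb : p • fth + (1 - p) • ftl = f := by
    rw [hfth, hftl]; funext θ
    simp only [Pi.add_apply, Pi.smul_apply, smul_eq_mul]
    field_simp
    ring
  have hnethl : fth ≠ ftl := by
    intro h
    apply hne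
    rw [← hfcomb, ← h]
    funext θ
    simp only [Pi.add_apply, Pi.smul_apply, smul_eq_mul]
    ring
  -- 0 < p * c fth + (1-p) * c ftl
  have hC : 0 < p * c fth + (1 - p) * c ftl := by
    have h := hconv.2 hthD htlD hnethl hp0 h1p0 (by ring)
    rw [hfcomb, hc0] at h
    simpa [smul_eq_mul] using h
  -- c fdh < (1-lam) * c fth
  have hdh' : c fdh < (1 - lam) * c fth := by
    have h := hconv.2 hfD hthD (Ne.symm hne) hl0 h1l0 (by ring)
    rw [← hdh] at h
    simp only [smul_eq_mul, hc0, mul_zero, zero_add] at h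
    exact h
  -- final arithmetic
  rw [hdl]
  set q := (1 - lam) / (1 - lam * (1 - p)) with hq
  have hpdeq : pd * (1 - lam) = q * p := by
    rw [hpd, hq]; field_simp
  have h1pdeq : 1 - pd = q * (1 - p) := by
    rw [h1pd, hq]; ring
  have hq1 : q < 1 := by
    rw [hq, div_lt_one hs]; nlinarith
  have key : pd * c fdh < pd * ((1 - lam) * c fth) :=
    (mul_lt_mul_iff_right₀ hpd0).2 hdh'
  have e : pd * ((1 - lam) * c fth) + (1 - pd) * c ftl
      = q * (p * c fth + (1 - p) * c ftl) := by
    linear_combination c fth * hpdeq + c ftl * h1pdeq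
  calc pd * c fdh + (1 - pd) * c ftl
      < pd * ((1 - lam) * c fth) + (1 - pd) * c ftl := by linarith
    _ = q * (p * c fth + (1 - p) * c ftl) := e
    _ < 1 * (p * c fth + (1 - p) * c ftl) := mul_lt_mul_of_pos_right hq1 hC
    _ = p * c fth + (1 - p) * c ftl := one_mul _
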